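/- Let K be a field, T = K[x_0,...,x_n], J a strongly stable monomial ideal generated in degree m with monomial basis B_J, and F a J-marked set generating the ideal I = (F). Then F is a J-marked basis (i.e., T/I is freely generated as K-vector space by the monomials not in J) if and only if dim_K I_t = dim_K J_t for all t ≥ m. -/

import Mathlib

open MvPolynomial

noncomputable section

/-- The total degree of an exponent vector. -/
def degOf {N : ℕ} (α : Fin N →₀ ℕ) : ℕ := α.sum fun _ e => e

/-- The degree `t` homogeneous component of a homogeneous ideal, as a `K`-subspace. -/
def degPiece {K : Type*} [Field K] {N : ℕ} (I : Ideal (MvPolynomial (Fin N) K)) (t : ℕ) :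
    Submodule K (MvPolynomial (Fin N) K) :=
  (Submodule.restrictScalars K
      (I : Submodule (MvPolynomial (Fin N) K) (MvPolynomial (Fin N) K)))
    ⊓ homogeneousSubmodule (Fin N) K t

/-- The Hilbert function of the quotient by a homogeneous ideal:
`dim_K (P/I)_t = dim_K P_t - dim_K I_t`. -/
def hilbF {K : Type*} [Field K] {N : ℕ} (I : Ideal (MvPolynomial (Fin N) K)) (t : ℕ) : ℕ :=
  Module.finrank K (homogeneousSubmodule (Fin N) K t) - Module.finrank K (degPiece I t)

/-- The ideal generated by the monomials with exponents in `S`. -/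
def monIdeal (K : Type*) [Field K] {N : ℕ} (S : Set (Fin N →₀ ℕ)) :
    Ideal (MvPolynomial (Fin N) K) :=
  Ideal.span ((fun a => (monomial a (1 : K))) '' S)

/-- A monomial ideal `J` is strongly stable: it is generated by monomials and for every
term `x^α ∈ J`, every `x_i ∣ x^α` and every `j > i`, also `(x_j/x_i)·x^α ∈ J`. -/
def SStable {K : Type*} [Field K] {N : ℕ} (J : Ideal (MvPolynomial (Fin N) K)) : Prop :=
  (∃ S : Set (Fin N →₀ ℕ), J = monIdeal K S) ∧
  ∀ α : Fin N →₀ ℕ, (monomial α (1 : K)) ∈ J → ∀ i j : Fin N, i < j → α i ≠ 0 →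
    (monomial (α - Finsupp.single i 1 + Finsupp.single j 1) (1 : K)) ∈ J

/-- A `B`-marked set: for each exponent `α ∈ B` (the monomial basis of `J = (B)`), a
homogeneous polynomial `f α = x^α - Σ c_{αγ} x^γ` with head term `x^α` (coefficient `1`) and
all other terms `x^γ` monomials of the same degree not belonging to `J`. -/
def IsMarkedSet {K : Type*} [Field K] {N : ℕ} (B : Finset (Fin N →₀ ℕ))
    (f : (Fin N →₀ ℕ) → MvPolynomial (Fin N) K) : Prop :=
  ∀ α ∈ B, (f α).IsHomogeneous (degOf α) ∧ (f α).coeff α = 1 ∧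
    ∀ β, β ≠ α → (f α).coeff β ≠ 0 →
      (monomial β (1 : K)) ∉ monIdeal K (B : Set (Fin N →₀ ℕ))

/-- The `K`-span of the monomials lying outside the monomial ideal `J = (B)`. -/
def compSpan (K : Type*) [Field K] {N : ℕ} (B : Finset (Fin N →₀ ℕ)) :
    Submodule K (MvPolynomial (Fin N) K) :=
  Submodule.span K
    { p | ∃ β : Fin N →₀ ℕ, (monomial β (1 : K)) ∉ monIdeal K (B : Set (Fin N →₀ ℕ)) ∧
      p = monomial β (1 : K) }

/-- A marked set `f` is a `J`-marked basis if the monomials outside `J = (B)` freely generate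
the quotient `T/(F)`, i.e. `T` is the direct sum (as `K`-vector space) of the ideal generated
by the marked polynomials and the span of the monomials outside `J`. -/
def IsMarkedBasis {K : Type*} [Field K] {N : ℕ} (B : Finset (Fin N →₀ ℕ))
    (f : (Fin N →₀ ℕ) → MvPolynomial (Fin N) K) : Prop :=
  IsMarkedSet B f ∧
  (Submodule.restrictScalars K
      ((Ideal.span (f '' (B : Set (Fin N →₀ ℕ)))) :
        Submodule (MvPolynomial (Fin N) K) (MvPolynomial (Fin N) K)))
    ⊓ compSpan K B = ⊥ ∧
  (Submodule.restrictScalars K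
      ((Ideal.span (f '' (B : Set (Fin N →₀ ℕ)))) :
        Submodule (MvPolynomial (Fin N) K) (MvPolynomial (Fin N) K)))
    ⊔ compSpan K B = ⊤

namespace MB

variable {N : ℕ}

lemma degOf_eq_sum (α : Fin N →₀ ℕ) : degOf α = ∑ i, α i := by
  rw [degOf, Finsupp.sum_fintype]
  intro _; rfl

lemma degOf_add (α β : Fin N →₀ ℕ) : degOf (α + β) = degOf α + degOf β := by
  simp [degOf_eq_sum, Finset.sum_add_distrib]

lemma apply_le_degOf (α : Fin N →₀ ℕ) (i : Fin N) : α i ≤ degOf α := by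
  rw [degOf_eq_sum]
  exact Finset.single_le_sum (fun _ _ => Nat.zero_le _) (Finset.mem_univ i)

lemma eq_of_le_of_degOf_eq {α β : Fin N →₀ ℕ} (h : α ≤ β) (hd : degOf α = degOf β) : α = β := by
  ext i
  by_contra hne
  have hlt : α i < β i := lt_of_le_of_ne (h i) hne
  have : ∑ j, α j < ∑ j, β j :=
    Finset.sum_lt_sum (fun j _ => h j) ⟨i, Finset.mem_univ i, hlt⟩
  rw [← degOf_eq_sum, ← degOf_eq_sum, hd] at this
  exact lt_irrefl _ this

/-- cumulative sum of `δ` over indices `≥ j`. -/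
def cum (δ : Fin N →₀ ℕ) (j : ℕ) : ℕ := ∑ i ∈ Finset.univ.filter (fun i : Fin N => j ≤ (i : ℕ)), δ i

lemma cum_le_cum (δ : Fin N →₀ ℕ) {j k : ℕ} (h : j ≤ k) : cum δ k ≤ cum δ j := by
  apply Finset.sum_le_sum_of_subset
  intro i hi
  simp only [Finset.mem_filter, Finset.mem_univ, true_and] at hi ⊢
  omega

lemma cum_succ (δ : Fin N →₀ ℕ) {j : ℕ} (hj : j < N) :
    cum δ j = δ ⟨j, hj⟩ + cum δ (j + 1) := by
  rw [cum, cum]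
  rw [show (Finset.univ.filter (fun i : Fin N => j ≤ (i : ℕ)))
      = insert ⟨j, hj⟩ (Finset.univ.filter (fun i : Fin N => j + 1 ≤ (i : ℕ))) by
    ext i
    simp only [Finset.mem_filter, Finset.mem_univ, true_and, Finset.mem_insert, Fin.ext_iff]
    omega]
  rw [Finset.sum_insert (by simp)]

lemma cum_of_ge (δ : Fin N →₀ ℕ) {j : ℕ} (hj : N ≤ j) : cum δ j = 0 := by
  rw [cum, Finset.sum_eq_zero]
  intro i hi
  simp only [Finset.mem_filter, Finset.mem_univ, true_and] at hi
  exact absurd (lt_of_lt_of_le i.isLt (le_trans hj hi)) (lt_irrefl _)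

lemma cum_zero (δ : Fin N →₀ ℕ) : cum δ 0 = degOf δ := by
  rw [degOf_eq_sum, cum]
  congr 1
  simp

lemma cum_add_sum_lt (δ : Fin N →₀ ℕ) (k : ℕ) :
    cum δ k + ∑ i ∈ Finset.univ.filter (fun i : Fin N => (i : ℕ) < k), δ i = degOf δ := by
  rw [degOf_eq_sum, cum, ← Finset.sum_filter_add_sum_filter_not Finset.univ
    (fun i : Fin N => k ≤ (i : ℕ))]
  congr 2
  ext i
  simp only [Finset.mem_filter, Finset.mem_univ, true_and, not_le]

lemma cum_le_degOf (δ : Fin N →₀ ℕ) (k : ℕ) : cum δ k ≤ degOf δ := by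
  have := cum_add_sum_lt δ k; omega

lemma cum_mono_arg {δ ε : Fin N →₀ ℕ} (h : δ ≤ ε) (k : ℕ) : cum δ k ≤ cum ε k :=
  Finset.sum_le_sum (fun i _ => h i)

lemma sum_range_tsub (g : ℕ → ℕ) (hg : ∀ k, g (k + 1) ≤ g k) (M : ℕ) :
    ∑ k ∈ Finset.range M, (g k - g (k + 1)) = g 0 - g M := by
  have anti : Antitone g := antitone_nat_of_succ_le hg
  induction M with
  | zero => simp
  | succ M ih =>
      rw [Finset.sum_range_succ, ih]
      have h1 : g (M + 1) ≤ g M := hg M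
      have h2 : g M ≤ g 0 := anti (Nat.zero_le M)
      omega

/-- the top part of degree `m` of `δ` : greedily uses the largest variables. -/
def topm (m : ℕ) (δ : Fin N →₀ ℕ) : Fin N →₀ ℕ :=
  Finsupp.onFinset δ.support (fun i => min (δ i) (m - cum δ ((i : ℕ) + 1)))
    (fun i h => by
      simp only [ne_eq] at h
      rw [Finsupp.mem_support_iff]
      intro h0
      exact h (by simp [h0]))

lemma topm_apply (m : ℕ) (δ : Fin N →₀ ℕ) (i : Fin N) :
    topm m δ i = min (δ i) (m - cum δ ((i : ℕ) + 1)) := rfl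

lemma topm_le (m : ℕ) (δ : Fin N →₀ ℕ) : topm m δ ≤ δ := by
  intro i
  rw [topm_apply]
  exact min_le_left _ _

lemma degOf_topm (m : ℕ) (δ : Fin N →₀ ℕ) : degOf (topm m δ) = min (degOf δ) m := by
  have key : ∀ i : Fin N, topm m δ i
      = min (cum δ (i : ℕ)) m - min (cum δ ((i : ℕ) + 1)) m := by
    intro i
    rw [topm_apply, cum_succ δ i.isLt]
    have : (⟨(i : ℕ), i.isLt⟩ : Fin N) = i := rfl
    rw [this]
    omega
  rw [degOf_eq_sum]
  calc ∑ i, topm m δ i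
      = ∑ i : Fin N, (min (cum δ (i : ℕ)) m - min (cum δ ((i : ℕ) + 1)) m) :=
        Finset.sum_congr rfl (fun i _ => key i)
    _ = ∑ k ∈ Finset.range N, (min (cum δ k) m - min (cum δ (k + 1)) m) :=
        Fin.sum_univ_eq_sum_range (fun k => min (cum δ k) m - min (cum δ (k + 1)) m) N
    _ = min (cum δ 0) m - min (cum δ N) m :=
        sum_range_tsub (fun k => min (cum δ k) m)
          (fun k => min_le_min (cum_le_cum δ (Nat.le_succ k)) le_rfl) N
    _ = min (degOf δ) m := by rw [cum_zero, cum_of_ge δ le_rfl]; omega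

lemma degOf_sub_topm (m : ℕ) (δ : Fin N →₀ ℕ) (h : m ≤ degOf δ) :
    degOf (δ - topm m δ) = degOf δ - m := by
  have h1 : (δ - topm m δ) + topm m δ = δ := tsub_add_cancel_of_le (topm_le m δ)
  have h2 := degOf_add (δ - topm m δ) (topm m δ)
  rw [h1, degOf_topm] at h2
  omega

/-- Structure of the bottom part : if something remains at `j`, everything below `j` remains. -/
lemma bot_struct (m : ℕ) (δ : Fin N →₀ ℕ) {i j : Fin N} (hij : i < j)
    (h : (δ - topm m δ) j ≠ 0) : (δ - topm m δ) i = δ i := by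
  rw [Finsupp.tsub_apply, topm_apply] at h ⊢
  have hj : m < cum δ (j : ℕ) := by
    rw [cum_succ δ j.isLt]
    have : (⟨(j : ℕ), j.isLt⟩ : Fin N) = j := rfl
    rw [this]
    omega
  have hij' : ((i : ℕ) + 1) ≤ (j : ℕ) := hij
  have : cum δ (j : ℕ) ≤ cum δ ((i : ℕ) + 1) := cum_le_cum δ hij'
  omega


/-- If `β ≤ δ`, `|β| = m` and `β` is not the top part of `δ`, there is an admissible move. -/
lemma exists_move {m : ℕ} {β δ : Fin N →₀ ℕ} (hle : β ≤ δ) (hdeg : degOf β = m)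
    (hne : β ≠ topm m δ) : ∃ i j : Fin N, i < j ∧ β i ≠ 0 ∧ β j < δ j := by
  by_contra hcon
  push_neg at hcon
  -- hcon : ∀ i j, i < j → β i ≠ 0 → δ j ≤ β j
  apply hne
  rcases eq_or_ne β 0 with h0 | h0
  · -- β = 0, m = 0
    subst h0
    have hm : m = 0 := by
      rw [← hdeg, degOf_eq_sum]; simp
    subst hm
    ext i
    rw [topm_apply]
    simp
  · have hsupp : β.support.Nonempty := Finsupp.support_nonempty_iff.mpr h0
    set i0 := β.support.min' hsupp with hi0
    have hi0mem : i0 ∈ β.support := β.support.min'_mem hsupp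
    have hi0ne : β i0 ≠ 0 := Finsupp.mem_support_iff.mp hi0mem
    have hlow : ∀ i : Fin N, i < i0 → β i = 0 := by
      intro i hi
      by_contra hiz
      exact absurd (β.support.min'_le i (Finsupp.mem_support_iff.mpr hiz)) (not_le.mpr hi)
    have hhigh : ∀ j : Fin N, i0 < j → β j = δ j := by
      intro j hj
      exact le_antisymm (hle j) (hcon i0 j hj hi0ne)
    -- cumulative sums agree above i0
    have hcum : ∀ k : ℕ, (i0 : ℕ) < k → cum δ k = cum β k := by
      intro k hk
      apply Finset.sum_congr rfl
      intro i hi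
      simp only [Finset.mem_filter, Finset.mem_univ, true_and] at hi
      exact (hhigh i (by omega : i0 < i)).symm
    -- cum β at i0 is m
    have hlowsum : ∑ i ∈ Finset.univ.filter (fun i : Fin N => (i : ℕ) < (i0 : ℕ)), β i = 0 := by
      apply Finset.sum_eq_zero
      intro i hi
      simp only [Finset.mem_filter, Finset.mem_univ, true_and] at hi
      exact hlow i hi
    have hcumi0 : cum β (i0 : ℕ) = m := by
      have := cum_add_sum_lt β (i0 : ℕ)
      rw [hlowsum, hdeg] at this
      omega
    have hcumi0' : cum β ((i0 : ℕ) + 1) = m - β i0 := by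
      have := cum_succ β i0.isLt
      have he : (⟨(i0 : ℕ), i0.isLt⟩ : Fin N) = i0 := rfl
      rw [he] at this
      have hb : β i0 ≤ m := by rw [← hdeg]; exact apply_le_degOf β i0
      omega
    have hcumB_le : ∀ k, cum β k ≤ m := by
      intro k
      have := cum_le_degOf β k; omega
    ext j
    rw [topm_apply]
    rcases lt_trichotomy j i0 with hj | hj | hj
    · -- below i0 : everything is 0
      have hcge : cum δ ((j : ℕ) + 1) ≥ m := by
        have h1 : cum δ ((j : ℕ) + 1) ≥ cum δ (i0 : ℕ) :=
          cum_le_cum δ (by exact_mod_cast hj)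
        have h2 : cum δ (i0 : ℕ) ≥ cum β (i0 : ℕ) := cum_mono_arg hle _
        omega
      rw [hlow j hj]
      omega
    · -- at i0
      have hj' : (i0 : ℕ) < (j : ℕ) + 1 := by rw [hj]; omega
      rw [hcum _ hj']
      have hc' : cum β ((j : ℕ) + 1) = m - β i0 := by rw [hj]; exact hcumi0'
      rw [hc', hj]
      have hb : β i0 ≤ m := by rw [← hdeg]; exact apply_le_degOf β i0
      have : β i0 ≤ δ i0 := hle i0
      omega
    · -- above i0 : β j = δ j and min picks δ j
      have hβj : β j = δ j := hhigh j hj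
      rw [hcum _ (by have : (i0 : ℕ) < (j : ℕ) := by exact_mod_cast hj
                     omega : (i0 : ℕ) < (j : ℕ) + 1)]
      have hsum : cum β ((j : ℕ) + 1) + β j ≤ m := by
        have hc := cum_succ β j.isLt
        have he : (⟨(j : ℕ), j.isLt⟩ : Fin N) = j := rfl
        rw [he] at hc
        have := hcumB_le (j : ℕ)
        omega
      omega


/-- weight of an exponent vector. -/
def wt (β : Fin N →₀ ℕ) : ℕ := ∑ i : Fin N, (i : ℕ) * β i

lemma wt_add (a b : Fin N →₀ ℕ) : wt (a + b) = wt a + wt b := by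
  simp [wt, Finsupp.add_apply, Nat.mul_add, Finset.sum_add_distrib]

lemma wt_single (j : Fin N) : wt (Finsupp.single j 1) = (j : ℕ) := by
  rw [wt]
  rw [Finset.sum_eq_single j]
  · simp
  · intro i _ hi
    rw [Finsupp.single_apply, if_neg (Ne.symm hi)]
    simp
  · simp

lemma single_le_of_ne {β : Fin N →₀ ℕ} {i : Fin N} (h : β i ≠ 0) :
    Finsupp.single i 1 ≤ β := by
  intro k
  rcases eq_or_ne k i with rfl | hk
  · simpa [Finsupp.single_apply] using Nat.one_le_iff_ne_zero.mpr h
  · simp [Finsupp.single_apply, Ne.symm hk]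

lemma wt_le (β : Fin N →₀ ℕ) : wt β ≤ N * degOf β := by
  rw [wt, degOf_eq_sum, Finset.mul_sum]
  apply Finset.sum_le_sum
  intro i _
  exact Nat.mul_le_mul_right _ (le_of_lt i.isLt)

lemma degOf_single (i : Fin N) (c : ℕ) : degOf (Finsupp.single i c) = c := by
  rw [degOf, Finsupp.sum_single_index]
  rfl

/-- the elementary move of strong stability. -/
lemma move_facts {δ β : Fin N →₀ ℕ} (hβle : β ≤ δ) {i j : Fin N} (hij : i < j)
    (hi : β i ≠ 0) (hj : β j < δ j) :
    (β - Finsupp.single i 1 + Finsupp.single j 1) ≤ δ ∧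
    degOf (β - Finsupp.single i 1 + Finsupp.single j 1) = degOf β ∧
    wt β < wt (β - Finsupp.single i 1 + Finsupp.single j 1) := by
  have hsle : Finsupp.single i 1 ≤ β := single_le_of_ne hi
  have hrec : (β - Finsupp.single i 1) + Finsupp.single i 1 = β :=
    tsub_add_cancel_of_le hsle
  have hijne : i ≠ j := ne_of_lt hij
  refine ⟨?_, ?_, ?_⟩
  · intro k
    rw [Finsupp.add_apply, Finsupp.tsub_apply]
    have hbd : β k ≤ δ k := hβle k
    rcases eq_or_ne k i with rfl | hki
    · rw [Finsupp.single_eq_same, Finsupp.single_apply, if_neg (Ne.symm hijne)]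
      omega
    · rw [Finsupp.single_apply, if_neg (fun h => hki h.symm)]
      rcases eq_or_ne k j with rfl | hkj
      · rw [Finsupp.single_eq_same]
        omega
      · rw [Finsupp.single_apply, if_neg (fun h => hkj h.symm)]
        omega
  · have h1 := degOf_add (β - Finsupp.single i 1) (Finsupp.single i 1)
    have h2 := degOf_add (β - Finsupp.single i 1) (Finsupp.single j 1)
    rw [hrec] at h1
    rw [degOf_single] at h1 h2
    omega
  · have h1 : wt ((β - Finsupp.single i 1) + Finsupp.single i 1) = wt β := by rw [hrec]
    rw [wt_add, wt_single] at h1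
    have h2 := wt_add (β - Finsupp.single i 1) (Finsupp.single j 1)
    rw [wt_single] at h2
    have hij' : (i : ℕ) < (j : ℕ) := hij
    omega

section Field

variable {K : Type*} [Field K]

lemma monomial_mem_monIdeal_iff {B : Finset (Fin N →₀ ℕ)} {β : Fin N →₀ ℕ} :
    monomial β (1 : K) ∈ monIdeal K (B : Set (Fin N →₀ ℕ)) ↔ ∃ α ∈ B, α ≤ β := by
  rw [monIdeal, mem_ideal_span_monomial_image]
  simp [support_monomial]

lemma mem_monIdeal_iff {B : Finset (Fin N →₀ ℕ)} {p : MvPolynomial (Fin N) K} :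
    p ∈ monIdeal K (B : Set (Fin N →₀ ℕ)) ↔ ∀ β ∈ p.support, ∃ α ∈ B, α ≤ β := by
  rw [monIdeal, mem_ideal_span_monomial_image]
  simp

/-- main strongly stable climb : the top part of `δ` is in `J`. -/
lemma topm_mem {B : Finset (Fin N →₀ ℕ)} {m : ℕ}
    (hss : ∀ α : Fin N →₀ ℕ, (monomial α (1 : K)) ∈ monIdeal K (B : Set (Fin N →₀ ℕ)) →
      ∀ i j : Fin N, i < j → α i ≠ 0 →
        (monomial (α - Finsupp.single i 1 + Finsupp.single j 1) (1 : K)) ∈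
          monIdeal K (B : Set (Fin N →₀ ℕ)))
    (hdegB : ∀ α ∈ B, degOf α = m) {δ : Fin N →₀ ℕ}
    (hδ : monomial δ (1 : K) ∈ monIdeal K (B : Set (Fin N →₀ ℕ))) :
    monomial (topm m δ) (1 : K) ∈ monIdeal K (B : Set (Fin N →₀ ℕ)) := by
  obtain ⟨α0, hα0B, hα0le⟩ := monomial_mem_monIdeal_iff.mp hδ
  have haux : ∀ C : ℕ, ∀ β : Fin N →₀ ℕ,
      monomial β (1 : K) ∈ monIdeal K (B : Set (Fin N →₀ ℕ)) → β ≤ δ → degOf β = m →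
      N * m - wt β ≤ C → monomial (topm m δ) (1 : K) ∈ monIdeal K (B : Set (Fin N →₀ ℕ)) := by
    intro C
    induction C with
    | zero =>
        intro β hβJ hβle hβdeg hC
        rcases eq_or_ne β (topm m δ) with rfl | hne
        · exact hβJ
        · exfalso
          obtain ⟨i, j, hij, hi, hj⟩ := exists_move hβle hβdeg hne
          obtain ⟨hle', hdeg', hwt'⟩ := move_facts hβle hij hi hj
          have hb1 : wt (β - Finsupp.single i 1 + Finsupp.single j 1) ≤ N * m := by
            have := wt_le (β - Finsupp.single i 1 + Finsupp.single j 1)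
            rw [hdeg', hβdeg] at this
            exact this
          omega
    | succ C ih =>
        intro β hβJ hβle hβdeg hC
        rcases eq_or_ne β (topm m δ) with rfl | hne
        · exact hβJ
        · obtain ⟨i, j, hij, hi, hj⟩ := exists_move hβle hβdeg hne
          obtain ⟨hle', hdeg', hwt'⟩ := move_facts hβle hij hi hj
          have hb1 : wt (β - Finsupp.single i 1 + Finsupp.single j 1) ≤ N * m := by
            have := wt_le (β - Finsupp.single i 1 + Finsupp.single j 1)
            rw [hdeg', hβdeg] at this
            exact this
          exact ih _ (hss β hβJ i j hij hi) hle' (by rw [hdeg', hβdeg]) (by omega)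
  exact haux (N * m) α0 (Ideal.subset_span ⟨α0, hα0B, rfl⟩) hα0le (hdegB α0 hα0B) (by omega)


/-- Key descent: reducing against a marked polynomial strictly decreases the lex order
of the "small part" of the exponent. -/
lemma lex_step {B : Finset (Fin N →₀ ℕ)} {m : ℕ}
    (hss : ∀ α : Fin N →₀ ℕ, (monomial α (1 : K)) ∈ monIdeal K (B : Set (Fin N →₀ ℕ)) →
      ∀ i j : Fin N, i < j → α i ≠ 0 →
        (monomial (α - Finsupp.single i 1 + Finsupp.single j 1) (1 : K)) ∈
          monIdeal K (B : Set (Fin N →₀ ℕ)))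
    (hdegB : ∀ α ∈ B, degOf α = m) {η γ : Fin N →₀ ℕ}
    (hγdeg : degOf γ = m) (hγJ : monomial γ (1 : K) ∉ monIdeal K (B : Set (Fin N →₀ ℕ)))
    (hJ : monomial (η + γ) (1 : K) ∈ monIdeal K (B : Set (Fin N →₀ ℕ))) :
    Finsupp.Lex (fun a b : Fin N => a > b) (fun a b : ℕ => a < b)
      ((η + γ) - topm m (η + γ)) η := by
  set δ' := η + γ with hδ'def
  set η' := δ' - topm m δ' with hη'def
  have hdegδ' : degOf δ' = degOf η + m := by rw [hδ'def, degOf_add, hγdeg]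
  have hm : m ≤ degOf δ' := by omega
  have hdegη' : degOf η' = degOf η := by
    rw [hη'def, degOf_sub_topm m δ' hm]
    omega
  have hne : η' ≠ η := by
    intro h
    have h1 : δ' - η' = topm m δ' := tsub_tsub_cancel_of_le (topm_le m δ')
    rw [h, hδ'def, add_tsub_cancel_left] at h1
    exact hγJ (h1 ▸ topm_mem hss hdegB hJ)
  classical
  set S := (η'.support ∪ η.support).filter (fun i => η' i ≠ η i) with hSdef
  have hSne : S.Nonempty := by
    obtain ⟨i, hi⟩ : ∃ i, η' i ≠ η i := by
      by_contra hcon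
      push_neg at hcon
      exact hne (Finsupp.ext hcon)
    refine ⟨i, ?_⟩
    rw [hSdef, Finset.mem_filter]
    refine ⟨?_, hi⟩
    rw [Finset.mem_union, Finsupp.mem_support_iff, Finsupp.mem_support_iff]
    by_cases h0 : η' i = 0
    · right; rw [h0] at hi; exact fun h => hi h.symm
    · left; exact h0
  set j := S.max' hSne with hjdef
  have hjS : j ∈ S := S.max'_mem hSne
  have hjne : η' j ≠ η j := (Finset.mem_filter.mp hjS).2
  have habove : ∀ k, j < k → η' k = η k := by
    intro k hk
    by_contra hkne
    have hkS : k ∈ S := by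
      rw [hSdef, Finset.mem_filter]
      refine ⟨?_, hkne⟩
      rw [Finset.mem_union, Finsupp.mem_support_iff, Finsupp.mem_support_iff]
      by_cases h0 : η' k = 0
      · right; rw [h0] at hkne; exact fun h => hkne h.symm
      · left; exact h0
    exact absurd (S.le_max' k hkS) (not_le.mpr hk)
  have hlt : η' j < η j := by
    by_contra hcon
    have hgt : η j < η' j := lt_of_le_of_ne (not_lt.mp hcon) (Ne.symm hjne)
    have hj0 : η' j ≠ 0 := by omega
    have hbelow : ∀ i : Fin N, i < j → η' i = δ' i := fun i hi => bot_struct m δ' hi hj0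
    have hgei : ∀ i, η i ≤ η' i := by
      intro i
      rcases lt_trichotomy i j with hij | hij | hij
      · rw [hbelow i hij, hδ'def, Finsupp.add_apply]
        exact Nat.le_add_right _ _
      · rw [hij]; exact le_of_lt hgt
      · rw [habove i hij]
    have : ∑ i, η i < ∑ i, η' i :=
      Finset.sum_lt_sum (fun i _ => hgei i) ⟨j, Finset.mem_univ j, hgt⟩
    rw [← degOf_eq_sum, ← degOf_eq_sum, hdegη'] at this
    exact lt_irrefl _ this
  rw [Finsupp.lex_def]
  exact ⟨j, fun k hk => habove k hk, hlt⟩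


lemma degOf_mono {a b : Fin N →₀ ℕ} (h : a ≤ b) : degOf a ≤ degOf b := by
  rw [degOf_eq_sum, degOf_eq_sum]
  exact Finset.sum_le_sum (fun i _ => h i)

lemma degOf_eq_degree (α : Fin N →₀ ℕ) : degOf α = α.degree := rfl

/-- Every monomial is in `I ⊔ N` : the reduction process. -/
lemma monomial_mem_sup {B : Finset (Fin N →₀ ℕ)} {m : ℕ}
    (hdegB : ∀ α ∈ B, degOf α = m)
    (hss : ∀ α : Fin N →₀ ℕ, (monomial α (1 : K)) ∈ monIdeal K (B : Set (Fin N →₀ ℕ)) →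
      ∀ i j : Fin N, i < j → α i ≠ 0 →
        (monomial (α - Finsupp.single i 1 + Finsupp.single j 1) (1 : K)) ∈
          monIdeal K (B : Set (Fin N →₀ ℕ)))
    {f : (Fin N →₀ ℕ) → MvPolynomial (Fin N) K} (hf : IsMarkedSet B f)
    (δ0 : Fin N →₀ ℕ) :
    monomial δ0 (1 : K) ∈
      (Submodule.restrictScalars K
        ((Ideal.span (f '' (B : Set (Fin N →₀ ℕ)))) :
          Submodule (MvPolynomial (Fin N) K) (MvPolynomial (Fin N) K)))
      ⊔ compSpan K B := by
  classical
  haveI hsto : IsStrictTotalOrder (Fin N) (fun a b : Fin N => a > b) :=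
    { trichotomous := fun a b h1 h2 => le_antisymm (not_lt.mp h1) (not_lt.mp h2)
      irrefl := fun a h => lt_irrefl a h
      trans := fun a b c h1 h2 => lt_trans h2 h1 }
  have wf : WellFounded (Finsupp.Lex (fun a b : Fin N => a > b) (fun a b : ℕ => a < b)) :=
    Finsupp.Lex.wellFounded_of_finite _ (Nat.lt_wfRel.wf)
  refine wf.induction (C := fun η => ∀ δ, δ - topm m δ = η →
    monomial δ (1 : K) ∈
      (Submodule.restrictScalars K
        ((Ideal.span (f '' (B : Set (Fin N →₀ ℕ)))) :
          Submodule (MvPolynomial (Fin N) K) (MvPolynomial (Fin N) K)))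
      ⊔ compSpan K B) (δ0 - topm m δ0) ?_ δ0 rfl
  intro η IH δ hηdef
  by_cases hJ : monomial δ (1 : K) ∈ monIdeal K (B : Set (Fin N →₀ ℕ))
  · subst hηdef
    have hαJ : monomial (topm m δ) (1 : K) ∈ monIdeal K (B : Set (Fin N →₀ ℕ)) :=
      topm_mem hss hdegB hJ
    obtain ⟨β0, hβ0B, hβ0le⟩ := monomial_mem_monIdeal_iff.mp hJ
    have hmle : m ≤ degOf δ := by
      rw [← hdegB β0 hβ0B]; exact degOf_mono hβ0le
    have hαB : topm m δ ∈ B := by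
      obtain ⟨β, hβB, hβle⟩ := monomial_mem_monIdeal_iff.mp hαJ
      have hβeq : β = topm m δ := eq_of_le_of_degOf_eq hβle
        (by rw [hdegB β hβB, degOf_topm]; omega)
      rwa [← hβeq]
    set α := topm m δ with hαdef
    obtain ⟨hhom, hc1, hnJ⟩ := hf α hαB
    have hδeq : (δ - α) + α = δ := tsub_add_cancel_of_le (topm_le m δ)
    set η0 := δ - α with hη0def
    have hαsupp : α ∈ (f α).support := mem_support_iff.mpr (by rw [hc1]; exact one_ne_zero)
    have hexp : monomial η0 (1 : K) * f α
        = monomial δ 1 + ∑ γ ∈ (f α).support.erase α, monomial (η0 + γ) ((f α).coeff γ) := by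
      conv_lhs => rw [as_sum (f α)]
      rw [Finset.mul_sum, ← Finset.add_sum_erase _ _ hαsupp]
      congr 1
      · rw [monomial_mul, one_mul, hc1, hδeq]
      · apply Finset.sum_congr rfl
        intro γ _
        rw [monomial_mul, one_mul]
    have hmem1 : monomial η0 (1 : K) * f α ∈ Ideal.span (f '' (B : Set (Fin N →₀ ℕ))) :=
      Ideal.mul_mem_left _ _ (Ideal.subset_span ⟨α, hαB, rfl⟩)
    have hsum : ∑ γ ∈ (f α).support.erase α, monomial (η0 + γ) ((f α).coeff γ) ∈
        (Submodule.restrictScalars K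
          ((Ideal.span (f '' (B : Set (Fin N →₀ ℕ)))) :
            Submodule (MvPolynomial (Fin N) K) (MvPolynomial (Fin N) K)))
        ⊔ compSpan K B := by
      apply Submodule.sum_mem
      intro γ hγ
      have hγne : γ ≠ α := Finset.ne_of_mem_erase hγ
      have hγc : (f α).coeff γ ≠ 0 := mem_support_iff.mp (Finset.mem_of_mem_erase hγ)
      have hγdeg : degOf γ = m := by
        by_contra hdd
        exact hγc (hhom.coeff_eq_zero (by rw [← degOf_eq_degree, hdegB α hαB]; exact hdd))
      have hmono : monomial (η0 + γ) ((f α).coeff γ)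
          = ((f α).coeff γ) • monomial (η0 + γ) (1 : K) := by
        rw [smul_monomial, smul_eq_mul, mul_one]
      rw [hmono]
      apply Submodule.smul_mem
      by_cases hJγ : monomial (η0 + γ) (1 : K) ∈ monIdeal K (B : Set (Fin N →₀ ℕ))
      · have hlex := lex_step hss hdegB hγdeg (hnJ γ hγne hγc) hJγ
        exact IH _ hlex (η0 + γ) rfl
      · exact Submodule.mem_sup_right (Submodule.subset_span ⟨η0 + γ, hJγ, rfl⟩)
    have hδmem : monomial δ (1 : K) = monomial η0 (1 : K) * f α
        - ∑ γ ∈ (f α).support.erase α, monomial (η0 + γ) ((f α).coeff γ) := by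
      rw [hexp]; ring
    rw [hδmem]
    exact Submodule.sub_mem _ (Submodule.mem_sup_left hmem1) hsum
  · exact Submodule.mem_sup_right (Submodule.subset_span ⟨δ, hJ, rfl⟩)


lemma degree_add' (a b : Fin N →₀ ℕ) : (a + b).degree = a.degree + b.degree := by
  rw [← degOf_eq_degree, ← degOf_eq_degree, ← degOf_eq_degree]
  exact degOf_add a b

lemma as_sum_smul (p : MvPolynomial (Fin N) K) :
    p = ∑ β ∈ p.support, (coeff β p) • monomial β (1 : K) := by
  conv_lhs => rw [as_sum p]
  apply Finset.sum_congr rfl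
  intro β _
  rw [smul_monomial, smul_eq_mul, mul_one]

lemma support_homComp_subset (t : ℕ) (p : MvPolynomial (Fin N) K) :
    (homogeneousComponent t p).support ⊆ p.support := by
  intro d hd
  rw [mem_support_iff, coeff_homogeneousComponent] at hd
  rw [mem_support_iff]
  intro h0
  apply hd
  split <;> simp [h0]

lemma hc_mul {q fp : MvPolynomial (Fin N) K} {m : ℕ} (hfp : fp.IsHomogeneous m) {t : ℕ}
    (ht : m ≤ t) :
    homogeneousComponent t (q * fp) = homogeneousComponent (t - m) q * fp := by
  classical
  ext d
  rw [coeff_homogeneousComponent, coeff_mul, coeff_mul]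
  by_cases hd : d.degree = t
  · rw [if_pos hd]
    apply Finset.sum_congr rfl
    intro x hx
    rw [coeff_homogeneousComponent]
    by_cases hv : coeff x.2 fp = 0
    · rw [hv, mul_zero, mul_zero]
    · have hdeg2 : x.2.degree = m := by
        by_contra hdd
        exact hv (hfp.coeff_eq_zero hdd)
      have hsum : x.1 + x.2 = d := Finset.HasAntidiagonal.mem_antidiagonal.mp hx
      have hdadd : x.1.degree + x.2.degree = d.degree := by
        rw [← degree_add', hsum]
      rw [if_pos (by omega : x.1.degree = t - m)]
  · rw [if_neg hd]
    symm
    apply Finset.sum_eq_zero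
    intro x hx
    rw [coeff_homogeneousComponent]
    by_cases hv : coeff x.2 fp = 0
    · rw [hv, mul_zero]
    · have hdeg2 : x.2.degree = m := by
        by_contra hdd
        exact hv (hfp.coeff_eq_zero hdd)
      have hsum : x.1 + x.2 = d := Finset.HasAntidiagonal.mem_antidiagonal.mp hx
      have hdadd : x.1.degree + x.2.degree = d.degree := by
        rw [← degree_add', hsum]
      rw [if_neg (by omega : ¬ x.1.degree = t - m), zero_mul]

lemma hc_mul_zero {q fp : MvPolynomial (Fin N) K} {m : ℕ} (hfp : fp.IsHomogeneous m) {t : ℕ}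
    (ht : t < m) : homogeneousComponent t (q * fp) = 0 := by
  classical
  ext d
  rw [coeff_homogeneousComponent, coeff_zero]
  by_cases hd : d.degree = t
  · rw [if_pos hd, coeff_mul]
    apply Finset.sum_eq_zero
    intro x hx
    by_cases hv : coeff x.2 fp = 0
    · rw [hv, mul_zero]
    · exfalso
      have hdeg2 : x.2.degree = m := by
        by_contra hdd
        exact hv (hfp.coeff_eq_zero hdd)
      have hsum : x.1 + x.2 = d := Finset.HasAntidiagonal.mem_antidiagonal.mp hx
      have hdadd : x.1.degree + x.2.degree = d.degree := by
        rw [← degree_add', hsum]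
      omega
  · rw [if_neg hd]

/-- Homogeneous components of elements of the marked ideal remain in the ideal. -/
lemma homComp_mem_ideal {B : Finset (Fin N →₀ ℕ)} {m : ℕ}
    (hdegB : ∀ α ∈ B, degOf α = m)
    {f : (Fin N →₀ ℕ) → MvPolynomial (Fin N) K} (hf : IsMarkedSet B f)
    {p : MvPolynomial (Fin N) K} (hp : p ∈ Ideal.span (f '' (B : Set (Fin N →₀ ℕ)))) (t : ℕ) :
    homogeneousComponent t p ∈ Ideal.span (f '' (B : Set (Fin N →₀ ℕ))) := by
  obtain ⟨k, c, g, hg⟩ := Submodule.mem_span_set'.mp hp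
  rw [← hg, map_sum]
  apply Submodule.sum_mem
  intro i _
  obtain ⟨α, hαB, hα⟩ := (g i).2
  have hhom : (↑(g i) : MvPolynomial (Fin N) K).IsHomogeneous m := by
    rw [← hα, ← hdegB α hαB]
    exact (hf α hαB).1
  rw [smul_eq_mul]
  by_cases ht : m ≤ t
  · rw [hc_mul hhom ht]
    exact Ideal.mul_mem_left _ _ (Ideal.subset_span (g i).2)
  · rw [hc_mul_zero hhom (not_le.mp ht)]
    exact Ideal.zero_mem _

lemma homComp_eq_zero_of_lt {B : Finset (Fin N →₀ ℕ)} {m : ℕ}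
    (hdegB : ∀ α ∈ B, degOf α = m)
    {f : (Fin N →₀ ℕ) → MvPolynomial (Fin N) K} (hf : IsMarkedSet B f)
    {p : MvPolynomial (Fin N) K} (hp : p ∈ Ideal.span (f '' (B : Set (Fin N →₀ ℕ)))) {t : ℕ}
    (ht : t < m) : homogeneousComponent t p = 0 := by
  obtain ⟨k, c, g, hg⟩ := Submodule.mem_span_set'.mp hp
  rw [← hg, map_sum]
  apply Finset.sum_eq_zero
  intro i _
  obtain ⟨α, hαB, hα⟩ := (g i).2
  have hhom : (↑(g i) : MvPolynomial (Fin N) K).IsHomogeneous m := by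
    rw [← hα, ← hdegB α hαB]
    exact (hf α hαB).1
  rw [smul_eq_mul]
  exact hc_mul_zero hhom ht

lemma mem_compSpan_iff {B : Finset (Fin N →₀ ℕ)} {p : MvPolynomial (Fin N) K} :
    p ∈ compSpan K B ↔
      ∀ β ∈ p.support, monomial β (1 : K) ∉ monIdeal K (B : Set (Fin N →₀ ℕ)) := by
  classical
  constructor
  · intro hp
    induction hp using Submodule.span_induction with
    | mem x hx =>
        obtain ⟨β, hβ, rfl⟩ := hx
        intro b hb
        rw [support_monomial, if_neg (one_ne_zero)] at hb
        rw [Finset.mem_singleton] at hb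
        rwa [hb]
    | zero => simp
    | add x y hx hy ihx ihy =>
        intro b hb
        rcases Finset.mem_union.mp (Finsupp.support_add hb) with h | h
        · exact ihx b h
        · exact ihy b h
    | smul a x hx ihx =>
        intro b hb
        exact ihx b (Finsupp.support_smul hb)
  · intro h
    rw [as_sum_smul p]
    apply Submodule.sum_mem
    intro β hβ
    exact Submodule.smul_mem _ _ (Submodule.subset_span ⟨β, h β hβ, rfl⟩)


lemma fd_homSub (t : ℕ) : FiniteDimensional K (homogeneousSubmodule (Fin N) K t) := by
  classical
  have hfin : {d : Fin N →₀ ℕ | d.degree = t}.Finite := by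
    apply Set.Finite.subset
      (Set.finite_Icc (0 : Fin N →₀ ℕ) (Finsupp.equivFunOnFinite.symm (fun _ => t)))
    intro d hd
    simp only [Set.mem_setOf_eq] at hd
    constructor
    · exact zero_le
    · intro i
      simp only [Finsupp.coe_equivFunOnFinite_symm]
      rw [← hd, ← degOf_eq_degree]
      exact apply_le_degOf d i
  rw [homogeneousSubmodule_eq_finsupp_supported, AddMonoidAlgebra.supported_eq_span_single]
  exact FiniteDimensional.span_of_finite K (hfin.image _)

variable {B : Finset (Fin N →₀ ℕ)} {m : ℕ}
  {f : (Fin N →₀ ℕ) → MvPolynomial (Fin N) K}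

/-- `J ∩ N = 0` globally. -/
lemma J_inf_N_eq_bot :
    (Submodule.restrictScalars K
        ((monIdeal K (B : Set (Fin N →₀ ℕ))) :
          Submodule (MvPolynomial (Fin N) K) (MvPolynomial (Fin N) K)))
      ⊓ compSpan K B = ⊥ := by
  rw [eq_bot_iff]
  rintro p ⟨h1, h2⟩
  have h1' := mem_monIdeal_iff.mp h1
  have h2' := mem_compSpan_iff.mp h2
  have : p.support = ∅ := by
    rw [Finset.eq_empty_iff_forall_notMem]
    intro β hβ
    exact h2' β hβ (monomial_mem_monIdeal_iff.mpr (h1' β hβ))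
  simp [Submodule.mem_bot, ← support_eq_empty.mp this]

/-- decomposition of the degree `t` piece by monomials in/out of `J`. -/
lemma Jt_sup_Nt (t : ℕ) :
    degPiece (monIdeal K (B : Set (Fin N →₀ ℕ))) t
      ⊔ (compSpan K B ⊓ homogeneousSubmodule (Fin N) K t)
      = homogeneousSubmodule (Fin N) K t := by
  apply le_antisymm
  · exact sup_le inf_le_right inf_le_right
  · intro p hp
    have hphom : p.IsHomogeneous t := (mem_homogeneousSubmodule _ _).mp hp
    rw [as_sum_smul p]
    apply Submodule.sum_mem
    intro β hβ
    apply Submodule.smul_mem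
    have hβdeg : β.degree = t := by
      by_contra hdd
      exact (mem_support_iff.mp hβ) (hphom.coeff_eq_zero hdd)
    have hmono : monomial β (1 : K) ∈ homogeneousSubmodule (Fin N) K t := by
      rw [mem_homogeneousSubmodule]
      exact isHomogeneous_monomial _ hβdeg
    by_cases hJ : monomial β (1 : K) ∈ monIdeal K (B : Set (Fin N →₀ ℕ))
    · exact Submodule.mem_sup_left ⟨hJ, hmono⟩
    · exact Submodule.mem_sup_right ⟨Submodule.subset_span ⟨β, hJ, rfl⟩, hmono⟩

/-- the key consequence of reduction : `I_t + N_t = T_t`. -/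
lemma It_sup_Nt
    (hdegB : ∀ α ∈ B, degOf α = m)
    (hss : ∀ α : Fin N →₀ ℕ, (monomial α (1 : K)) ∈ monIdeal K (B : Set (Fin N →₀ ℕ)) →
      ∀ i j : Fin N, i < j → α i ≠ 0 →
        (monomial (α - Finsupp.single i 1 + Finsupp.single j 1) (1 : K)) ∈
          monIdeal K (B : Set (Fin N →₀ ℕ)))
    (hf : IsMarkedSet B f) (t : ℕ) :
    degPiece (Ideal.span (f '' (B : Set (Fin N →₀ ℕ)))) t
      ⊔ (compSpan K B ⊓ homogeneousSubmodule (Fin N) K t)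
      = homogeneousSubmodule (Fin N) K t := by
  apply le_antisymm
  · exact sup_le inf_le_right inf_le_right
  · intro p hp
    have hphom : p.IsHomogeneous t := (mem_homogeneousSubmodule _ _).mp hp
    rw [as_sum_smul p]
    apply Submodule.sum_mem
    intro β hβ
    apply Submodule.smul_mem
    have hβdeg : β.degree = t := by
      by_contra hdd
      exact (mem_support_iff.mp hβ) (hphom.coeff_eq_zero hdd)
    have hmono : monomial β (1 : K) ∈ homogeneousSubmodule (Fin N) K t := by
      rw [mem_homogeneousSubmodule]
      exact isHomogeneous_monomial _ hβdeg
    obtain ⟨a, ha, b, hb, hab⟩ := Submodule.mem_sup.mp (monomial_mem_sup hdegB hss hf β)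
    have hcomp : monomial β (1 : K) = homogeneousComponent t a + homogeneousComponent t b := by
      have h := congrArg (homogeneousComponent t) hab
      rw [map_add, homogeneousComponent_of_mem hmono, if_pos rfl] at h
      exact h.symm
    rw [hcomp]
    apply Submodule.add_mem
    · exact Submodule.mem_sup_left ⟨homComp_mem_ideal hdegB hf ha t, homogeneousComponent_mem t a⟩
    · refine Submodule.mem_sup_right ⟨?_, homogeneousComponent_mem t b⟩
      apply mem_compSpan_iff.mpr
      intro d hd
      exact mem_compSpan_iff.mp hb d (support_homComp_subset t b hd)

/-- `I + N` is everything. -/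
lemma I_sup_N_eq_top
    (hdegB : ∀ α ∈ B, degOf α = m)
    (hss : ∀ α : Fin N →₀ ℕ, (monomial α (1 : K)) ∈ monIdeal K (B : Set (Fin N →₀ ℕ)) →
      ∀ i j : Fin N, i < j → α i ≠ 0 →
        (monomial (α - Finsupp.single i 1 + Finsupp.single j 1) (1 : K)) ∈
          monIdeal K (B : Set (Fin N →₀ ℕ)))
    (hf : IsMarkedSet B f) :
    (Submodule.restrictScalars K
        ((Ideal.span (f '' (B : Set (Fin N →₀ ℕ)))) :
          Submodule (MvPolynomial (Fin N) K) (MvPolynomial (Fin N) K)))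
      ⊔ compSpan K B = ⊤ := by
  rw [eq_top_iff]
  intro p _
  rw [as_sum_smul p]
  apply Submodule.sum_mem
  intro β _
  exact Submodule.smul_mem _ _ (monomial_mem_sup hdegB hss hf β)

end Field
end MB

open MB in
theorem isMarkedBasis_iff_dim_eq {K : Type*} [Field K] {n m : ℕ}
    (B : Finset (Fin (n + 1) →₀ ℕ)) (hdeg : ∀ α ∈ B, degOf α = m)
    (hss : SStable (monIdeal K (B : Set (Fin (n + 1) →₀ ℕ))))
    (f : (Fin (n + 1) →₀ ℕ) → MvPolynomial (Fin (n + 1)) K) (hf : IsMarkedSet B f) :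
    IsMarkedBasis B f ↔
      ∀ t ≥ m,
        Module.finrank K (degPiece (Ideal.span (f '' (B : Set (Fin (n + 1) →₀ ℕ)))) t) =
        Module.finrank K (degPiece (monIdeal K (B : Set (Fin (n + 1) →₀ ℕ))) t) := by
  classical
  obtain ⟨-, hssmove⟩ := hss
  have hJdim : ∀ t : ℕ,
      Module.finrank K (degPiece (monIdeal K (B : Set (Fin (n + 1) →₀ ℕ))) t)
        + Module.finrank K ↥(compSpan K B ⊓ homogeneousSubmodule (Fin (n + 1)) K t)
      = Module.finrank K (homogeneousSubmodule (Fin (n + 1)) K t) := by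
    intro t
    haveI := fd_homSub (K := K) (N := n + 1) t
    haveI : FiniteDimensional K (degPiece (monIdeal K (B : Set (Fin (n + 1) →₀ ℕ))) t) :=
      Submodule.finiteDimensional_of_le inf_le_right
    haveI : FiniteDimensional K ↥(compSpan K B ⊓ homogeneousSubmodule (Fin (n + 1)) K t) :=
      Submodule.finiteDimensional_of_le inf_le_right
    have h := Submodule.finrank_sup_add_finrank_inf_eq
      (degPiece (monIdeal K (B : Set (Fin (n + 1) →₀ ℕ))) t)
      (compSpan K B ⊓ homogeneousSubmodule (Fin (n + 1)) K t)
    rw [Jt_sup_Nt t] at h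
    have hbot : degPiece (monIdeal K (B : Set (Fin (n + 1) →₀ ℕ))) t
        ⊓ (compSpan K B ⊓ homogeneousSubmodule (Fin (n + 1)) K t) = ⊥ := by
      have hle : degPiece (monIdeal K (B : Set (Fin (n + 1) →₀ ℕ))) t
          ⊓ (compSpan K B ⊓ homogeneousSubmodule (Fin (n + 1)) K t)
          ≤ (Submodule.restrictScalars K
              ((monIdeal K (B : Set (Fin (n + 1) →₀ ℕ))) :
                Submodule (MvPolynomial (Fin (n + 1)) K) (MvPolynomial (Fin (n + 1)) K)))
            ⊓ compSpan K B := fun x hx => ⟨hx.1.1, hx.2.1⟩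
      rw [J_inf_N_eq_bot] at hle
      exact le_bot_iff.mp hle
    rw [hbot, finrank_bot] at h
    omega
  have hIdim : ∀ t : ℕ,
      Module.finrank K (homogeneousSubmodule (Fin (n + 1)) K t)
        + Module.finrank K ↥(degPiece (Ideal.span (f '' (B : Set (Fin (n + 1) →₀ ℕ)))) t
            ⊓ (compSpan K B ⊓ homogeneousSubmodule (Fin (n + 1)) K t))
      = Module.finrank K (degPiece (Ideal.span (f '' (B : Set (Fin (n + 1) →₀ ℕ)))) t)
        + Module.finrank K ↥(compSpan K B ⊓ homogeneousSubmodule (Fin (n + 1)) K t) := by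
    intro t
    haveI := fd_homSub (K := K) (N := n + 1) t
    haveI : FiniteDimensional K
        (degPiece (Ideal.span (f '' (B : Set (Fin (n + 1) →₀ ℕ)))) t) :=
      Submodule.finiteDimensional_of_le inf_le_right
    haveI : FiniteDimensional K ↥(compSpan K B ⊓ homogeneousSubmodule (Fin (n + 1)) K t) :=
      Submodule.finiteDimensional_of_le inf_le_right
    have h := Submodule.finrank_sup_add_finrank_inf_eq
      (degPiece (Ideal.span (f '' (B : Set (Fin (n + 1) →₀ ℕ)))) t)
      (compSpan K B ⊓ homogeneousSubmodule (Fin (n + 1)) K t)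
    rw [It_sup_Nt hdeg hssmove hf t] at h
    exact h
  constructor
  · rintro ⟨-, hbot, -⟩ t _
    have hItNt_bot : degPiece (Ideal.span (f '' (B : Set (Fin (n + 1) →₀ ℕ)))) t
        ⊓ (compSpan K B ⊓ homogeneousSubmodule (Fin (n + 1)) K t) = ⊥ := by
      have hle : degPiece (Ideal.span (f '' (B : Set (Fin (n + 1) →₀ ℕ)))) t
          ⊓ (compSpan K B ⊓ homogeneousSubmodule (Fin (n + 1)) K t)
          ≤ (Submodule.restrictScalars K
              ((Ideal.span (f '' (B : Set (Fin (n + 1) →₀ ℕ)))) :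
                Submodule (MvPolynomial (Fin (n + 1)) K) (MvPolynomial (Fin (n + 1)) K)))
            ⊓ compSpan K B := fun x hx => ⟨hx.1.1, hx.2.1⟩
      rw [hbot] at hle
      exact le_bot_iff.mp hle
    have h1 := hIdim t
    rw [hItNt_bot, finrank_bot] at h1
    have h2 := hJdim t
    omega
  · intro hdim
    refine ⟨hf, ?_, I_sup_N_eq_top hdeg hssmove hf⟩
    rw [eq_bot_iff]
    rintro p ⟨hpI, hpN⟩
    have hpI' : p ∈ Ideal.span (f '' (B : Set (Fin (n + 1) →₀ ℕ))) := hpI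
    have hzero : ∀ t : ℕ, homogeneousComponent t p = 0 := by
      intro t
      by_cases ht : t < m
      · exact homComp_eq_zero_of_lt hdeg hf hpI' ht
      · push_neg at ht
        haveI := fd_homSub (K := K) (N := n + 1) t
        haveI : FiniteDimensional K
            (degPiece (Ideal.span (f '' (B : Set (Fin (n + 1) →₀ ℕ)))) t) :=
          Submodule.finiteDimensional_of_le inf_le_right
        haveI : FiniteDimensional K ↥(compSpan K B ⊓ homogeneousSubmodule (Fin (n + 1)) K t) :=
          Submodule.finiteDimensional_of_le inf_le_right
        haveI : FiniteDimensional K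
            ↥(degPiece (Ideal.span (f '' (B : Set (Fin (n + 1) →₀ ℕ)))) t
              ⊓ (compSpan K B ⊓ homogeneousSubmodule (Fin (n + 1)) K t)) :=
          Submodule.finiteDimensional_of_le inf_le_left
        have h1 := hIdim t
        have h2 := hJdim t
        have h3 := hdim t ht
        have h4 : Module.finrank K
            ↥(degPiece (Ideal.span (f '' (B : Set (Fin (n + 1) →₀ ℕ)))) t
              ⊓ (compSpan K B ⊓ homogeneousSubmodule (Fin (n + 1)) K t)) = 0 := by
          omega
        have hItNt : degPiece (Ideal.span (f '' (B : Set (Fin (n + 1) →₀ ℕ)))) t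
            ⊓ (compSpan K B ⊓ homogeneousSubmodule (Fin (n + 1)) K t) = ⊥ :=
          Submodule.finrank_eq_zero.mp h4
        have hmem : homogeneousComponent t p
            ∈ degPiece (Ideal.span (f '' (B : Set (Fin (n + 1) →₀ ℕ)))) t
              ⊓ (compSpan K B ⊓ homogeneousSubmodule (Fin (n + 1)) K t) := by
          refine ⟨⟨?_, homogeneousComponent_mem t p⟩, ⟨?_, homogeneousComponent_mem t p⟩⟩
          · exact homComp_mem_ideal hdeg hf hpI' t
          · apply mem_compSpan_iff.mpr
            intro d hd
            exact mem_compSpan_iff.mp hpN d (support_homComp_subset t p hd)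
        rw [hItNt] at hmem
        exact hmem
    rw [Submodule.mem_bot, ← sum_homogeneousComponent p]
    exact Finset.sum_eq_zero (fun t _ => hzero t)




end
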